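/- Let M be a sequence of positive reals with M₀ = 1, set m_j := M_{j+1}/M_j, and define R_j := ∑_{n=0}^∞ 2^{-n}·(M_n/m_n^n)·m_n^j ∈ (0,∞] for j ∈ ℕ₀. Then R_j ≥ M_j/2^j for all j ∈ ℕ₀. If moreover M is log-convex, then each series defining R_j converges and R_j ≤ 2·M_j for all j ∈ ℕ₀; consequently (R_j)_j is equivalent to M. -/

import Mathlib

open Filter Complex Asymptotics
open scoped Topology BigOperators

noncomputable section

/-- The open sector in ℂ of opening `α·π` bisected by the positive real axis. -/
def Sector (α : ℝ) : Set ℂ := {z : ℂ | z ≠ 0 ∧ |Complex.arg z| < α * Real.pi / 2}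

/-- The Roumieu ultraholomorphic class `A_{{M}}(S_α)`. -/
def ASet (M : ℕ → ℝ) (α : ℝ) : Set (ℂ → ℂ) :=
  {f | DifferentiableOn ℂ f (Sector α) ∧
    ∃ h > (0:ℝ), ∃ C : ℝ, ∀ j : ℕ, ∀ z ∈ Sector α,
      ‖iteratedDerivWithin j f (Sector α) z‖ ≤ C * h ^ j * M j}

/-- Equivalence of sequences: `a_j ≤ A·B^j·b_j` and `b_j ≤ A·B^j·a_j`. -/
def SeqEquiv (a b : ℕ → ℝ) : Prop :=
  ∃ A > (0:ℝ), ∃ B > (0:ℝ), ∀ j : ℕ, a j ≤ A * B ^ j * b j ∧ b j ≤ A * B ^ j * a j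

/-- Log-convexity: `L_j² ≤ L_{j-1}·L_{j+1}` for `j ≥ 1`. -/
def IsLogConvexSeq (L : ℕ → ℝ) : Prop := ∀ j : ℕ, L (j+1) ^ 2 ≤ L j * L (j+2)

/-- `Gbar s j = j^{s·j}` (with the convention `0⁰ = 1`, automatic for `rpow`). -/
def Gbar (s : ℝ) (j : ℕ) : ℝ := (j : ℝ) ^ (s * (j : ℝ))

/-- Weight matrix: positive sequences, first term 1, nondecreasing in the parameter. -/
def IsWeightMatrix (M : ℝ → ℕ → ℝ) : Prop :=
  (∀ p > (0:ℝ), ∀ j : ℕ, 0 < M p j) ∧ (∀ p > (0:ℝ), M p 0 = 1) ∧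
    (∀ p q : ℝ, 0 < p → p ≤ q → ∀ j : ℕ, M p j ≤ M q j)

/-- The class `A_{{𝓜}}(S_α)` associated with a weight matrix. -/
def AMatSet (M : ℝ → ℕ → ℝ) (α : ℝ) : Set (ℂ → ℂ) := {f | ∃ p > (0:ℝ), f ∈ ASet (M p) α}

/-- `M̌_j = M_j/j!`. -/
def checkSeq (N : ℕ → ℝ) (j : ℕ) : ℝ := N j / (Nat.factorial j : ℝ)

/-- Condition `(𝓜_{rai})`. -/
def Mrai (M : ℝ → ℕ → ℝ) : Prop :=
  ∀ p > (0:ℝ), ∃ C > (0:ℝ), ∃ p' > (0:ℝ), ∀ j k : ℕ, 1 ≤ j → j ≤ k →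
    (checkSeq (M p) j) ^ ((j:ℝ)⁻¹) ≤ C * (checkSeq (M p') k) ^ ((k:ℝ)⁻¹)

/-- Condition `(𝓜_{C^ω})`. -/
def MComega (M : ℝ → ℕ → ℝ) : Prop :=
  ∃ p > (0:ℝ),
    0 < Filter.liminf (fun j : ℕ => (checkSeq (M p) j) ^ ((j:ℝ)⁻¹)) Filter.atTop

/-- Condition `(𝓜_{dc})`. -/
def Mdc (M : ℝ → ℕ → ℝ) : Prop :=
  ∀ p > (0:ℝ), ∃ C > (0:ℝ), ∃ p' > (0:ℝ), ∀ j : ℕ, M p (j+1) ≤ C ^ (j+1) * M p' j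

/-- `N°_k`: maximum of `N_ℓ·N_{j₁}⋯N_{j_ℓ}` over `j_i ∈ ℕ, j₁+⋯+j_ℓ = k`; `N°₀ = 1`. -/
def circSeq (N : ℕ → ℝ) (k : ℕ) : ℝ :=
  if k = 0 then 1 else
    sSup {x : ℝ | ∃ (l : ℕ) (js : Fin l → ℕ), (∀ i, 1 ≤ js i) ∧ (∑ i, js i) = k ∧
      x = N l * ∏ i, N (js i)}

/-- `(rai)` for a single sequence. -/
def SeqRai (N : ℕ → ℝ) : Prop :=
  ∃ C > (0:ℝ), ∀ j k : ℕ, 1 ≤ j → j ≤ k →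
    (checkSeq N j) ^ ((j:ℝ)⁻¹) ≤ C * (checkSeq N k) ^ ((k:ℝ)⁻¹)

/-- `(dc)` for a single sequence. -/
def SeqDc (N : ℕ → ℝ) : Prop := ∃ D ≥ (1:ℝ), ∀ j : ℕ, N (j+1) ≤ D ^ (j+1) * N j

/-- `(FdB)` for a single sequence. -/
def SeqFdB (N : ℕ → ℝ) : Prop :=
  ∃ C ≥ (1:ℝ), ∃ h ≥ (1:ℝ), ∀ j : ℕ, circSeq (checkSeq N) j ≤ C * h ^ j * checkSeq N j

/-- Condition `(𝓜_{FdB})`. -/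
def MFdB (M : ℝ → ℕ → ℝ) : Prop :=
  ∀ p > (0:ℝ), ∃ p' > (0:ℝ), ∃ C : ℝ, ∀ k : ℕ, 1 ≤ k →
    (circSeq (checkSeq (M p)) k / checkSeq (M p') k) ^ ((k:ℝ)⁻¹) ≤ C

/-- `L` is the log-convex minorant of `a` (within positive log-convex sequences). -/
def IsLcMinorant (a L : ℕ → ℝ) : Prop :=
  (∀ j, 0 < L j) ∧ IsLogConvexSeq L ∧ (∀ j, L j ≤ a j) ∧
    ∀ L' : ℕ → ℝ, (∀ j, 0 < L' j) → IsLogConvexSeq L' → (∀ j, L' j ≤ a j) → ∀ j, L' j ≤ L j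

/-- Holomorphic closedness of a class of functions on `S_α`. -/
def HolClosed (S : Set (ℂ → ℂ)) (α : ℝ) : Prop :=
  ∀ f ∈ S, ∀ U : Set ℂ, IsOpen U → closure (f '' Sector α) ⊆ U →
    ∀ g : ℂ → ℂ, DifferentiableOn ℂ g U → g ∘ f ∈ S

/-- Inverse closedness of a class of functions on `S_α`. -/
def InvClosed (S : Set (ℂ → ℂ)) (α : ℝ) : Prop :=
  ∀ f ∈ S, (∃ c > (0:ℝ), ∀ z ∈ Sector α, c ≤ ‖f z‖) → (fun z => (f z)⁻¹) ∈ S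

/-- The class `H_{{𝓜}}(U)` for a weight matrix. -/
def HMatClass (M : ℝ → ℕ → ℝ) (U : Set ℂ) : Set (ℂ → ℂ) :=
  {g | DifferentiableOn ℂ g U ∧ ∀ K : Set ℂ, K ⊆ U → IsCompact K →
    ∃ p > (0:ℝ), ∃ h > (0:ℝ), ∃ C : ℝ, ∀ j : ℕ, ∀ z ∈ K,
      ‖iteratedDerivWithin j g U z‖ ≤ C * h ^ j * M p j}

/-- The class `H_{{M}}(U)` for a single sequence. -/
def HSeqClass (N : ℕ → ℝ) (U : Set ℂ) : Set (ℂ → ℂ) :=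
  {g | DifferentiableOn ℂ g U ∧ ∀ K : Set ℂ, K ⊆ U → IsCompact K →
    ∃ h > (0:ℝ), ∃ C : ℝ, ∀ j : ℕ, ∀ z ∈ K,
      ‖iteratedDerivWithin j g U z‖ ≤ C * h ^ j * N j}

/-- Closedness under composition for the matrix class. -/
def CompClosedMat (M : ℝ → ℕ → ℝ) (α : ℝ) : Prop :=
  ∀ f ∈ AMatSet M α, ∀ U : Set ℂ, IsOpen U → closure (f '' Sector α) ⊆ U →
    ∀ g ∈ HMatClass M U, g ∘ f ∈ AMatSet M α

/-- Closedness under composition for a single-sequence class. -/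
def CompClosedSeq (N : ℕ → ℝ) (α : ℝ) : Prop :=
  ∀ f ∈ ASet N α, ∀ U : Set ℂ, IsOpen U → closure (f '' Sector α) ⊆ U →
    ∀ g ∈ HSeqClass N U, g ∘ f ∈ ASet N α

/-- `f` is characteristic in `A_{{L}}(S_α)`. -/
def Characteristic (L : ℕ → ℝ) (α : ℝ) (f : ℂ → ℂ) : Prop :=
  f ∈ ASet L α ∧ ∀ N : ℕ → ℝ, (∀ j, 0 < N j) → N 0 = 1 →
    f ∈ ASet N α → ASet N α ⊆ ASet L α → ASet N α = ASet L α

/-- Coefficient `2^{-n} M_n/m_n^n` of the `T_M`-transform. -/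
def coefT (M : ℕ → ℝ) (n : ℕ) : ℝ := (1/2:ℝ)^n * (M n / (M (n+1) / M n) ^ n)

/-- The sequence of quotients `m_n = M_{n+1}/M_n`. -/
def quotSeq (M : ℕ → ℝ) (n : ℕ) : ℝ := M (n+1) / M n

/-- `R_j = ∑ 2^{-n}(M_n/m_n^n) m_n^j` (as a real tsum). -/
def Rseq (M : ℕ → ℝ) (j : ℕ) : ℝ := ∑' n : ℕ, coefT M n * (quotSeq M n) ^ j

/-- The `T_M`-transform. -/
def Ttrans (M : ℕ → ℝ) (f : ℂ → ℂ) (z : ℂ) : ℂ :=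
  ∑' n : ℕ, (coefT M n : ℂ) * f ((quotSeq M n : ℂ) * z)

/-- Weight function: continuous, nondecreasing, `ω(0)=0`, nonnegative, `ω(t)→∞`. -/
def IsWeightFunction (ω : ℝ → ℝ) : Prop :=
  ContinuousOn ω (Set.Ici 0) ∧ MonotoneOn ω (Set.Ici 0) ∧ ω 0 = 0 ∧
    (∀ t ≥ (0:ℝ), 0 ≤ ω t) ∧ Filter.Tendsto ω Filter.atTop Filter.atTop

def Om0 (ω : ℝ → ℝ) : Prop := ∀ t ∈ Set.Icc (0:ℝ) 1, ω t = 0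
def Om1 (ω : ℝ → ℝ) : Prop := ∃ L ≥ (1:ℝ), ∀ t ≥ (0:ℝ), ω (2*t) ≤ L * (ω t + 1)
def Om2 (ω : ℝ → ℝ) : Prop := ∃ C > (0:ℝ), ∃ t₀ : ℝ, ∀ t ≥ t₀, ω t ≤ C * t
def Om3 (ω : ℝ → ℝ) : Prop := Real.log =o[Filter.atTop] ω
def Om4 (ω : ℝ → ℝ) : Prop := ConvexOn ℝ Set.univ (fun t => ω (Real.exp t))
def Om5 (ω : ℝ → ℝ) : Prop := ω =o[Filter.atTop] (fun t => t)
def Om6 (ω : ℝ → ℝ) : Prop := ∃ H ≥ (1:ℝ), ∀ t ≥ (0:ℝ), 2 * ω t ≤ ω (H * t) + H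

/-- Condition `(α₀)` for a weight function. -/
def Alpha0 (ω : ℝ → ℝ) : Prop :=
  ∃ C ≥ (1:ℝ), ∃ t₀ ≥ (0:ℝ), ∀ lam ≥ (1:ℝ), ∀ t ≥ t₀, ω (lam * t) ≤ C * lam * ω t

/-- The set `W₀`. -/
def InW0 (ω : ℝ → ℝ) : Prop := IsWeightFunction ω ∧ Om0 ω ∧ Om3 ω ∧ Om4 ω

/-- The set `W`. -/
def InW (ω : ℝ → ℝ) : Prop := InW0 ω ∧ Om1 ω

/-- The Legendre–Fenchel–Young conjugate `φ*_ω`. -/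
def phiStar (ω : ℝ → ℝ) (x : ℝ) : ℝ :=
  sSup {r : ℝ | ∃ y : ℝ, 0 ≤ y ∧ r = x * y - ω (Real.exp y)}

/-- The weight matrix associated with `ω`: `W^{(ℓ)}_j = exp((1/ℓ)·φ*_ω(ℓj))`. -/
def Wmat (ω : ℝ → ℝ) (ℓ : ℝ) (j : ℕ) : ℝ := Real.exp ((1/ℓ) * phiStar ω (ℓ * (j:ℝ)))

/-- The class `A_{{ω}}(S_α)`. -/
def AOmegaSet (ω : ℝ → ℝ) (α : ℝ) : Set (ℂ → ℂ) :=
  {f | DifferentiableOn ℂ f (Sector α) ∧ ∃ ℓ > (0:ℝ), ∃ C : ℝ,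
    ∀ j : ℕ, ∀ z ∈ Sector α, ‖iteratedDerivWithin j f (Sector α) z‖ ≤ C * Wmat ω ℓ j}

/-- Closedness under composition for the `ω`-class. -/
def CompClosedOmega (ω : ℝ → ℝ) (α : ℝ) : Prop :=
  ∀ f ∈ AOmegaSet ω α, ∀ U : Set ℂ, IsOpen U → closure (f '' Sector α) ⊆ U →
    ∀ g ∈ HMatClass (Wmat ω) U, g ∘ f ∈ AOmegaSet ω α

/-- One-sided matrix comparison `𝓜 {⪯} 𝓛`: `sup_{j≥1}(M^{(p)}_j/L^{(q)}_j)^{1/j} < ∞`. -/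
def MatPreceq (M L : ℝ → ℕ → ℝ) : Prop :=
  ∀ p > (0:ℝ), ∃ q > (0:ℝ), ∃ C : ℝ, ∀ j : ℕ, 1 ≤ j → (M p j / L q j) ^ ((j:ℝ)⁻¹) ≤ C

/-- `R`-equivalence of weight matrices. -/
def REquivMat (M L : ℝ → ℕ → ℝ) : Prop := MatPreceq M L ∧ MatPreceq L M

section aux
variable {M : ℕ → ℝ}

lemma quot_pos (hMpos : ∀ j, 0 < M j) (n : ℕ) : 0 < quotSeq M n :=
  div_pos (hMpos _) (hMpos _)

lemma quot_mono (hMpos : ∀ j, 0 < M j) (hlc : IsLogConvexSeq M) :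
    Monotone (quotSeq M) := by
  apply monotone_nat_of_le_succ
  intro n
  have h := hlc n
  unfold quotSeq
  rw [div_le_div_iff₀ (hMpos n) (hMpos (n + 1))]
  nlinarith [hMpos n, hMpos (n + 1), hMpos (n + 2)]

lemma mul_quot_pow_le (hMpos : ∀ j, 0 < M j) (hlc : IsLogConvexSeq M) (n k : ℕ) :
    M n * quotSeq M n ^ k ≤ M (n + k) := by
  induction k with
  | zero => simp
  | succ k ih =>
    have hm := quot_mono hMpos hlc (show n ≤ n + k by omega)
    calc M n * quotSeq M n ^ (k + 1) = M n * quotSeq M n ^ k * quotSeq M n := by ring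
      _ ≤ M (n + k) * quotSeq M n :=
          mul_le_mul_of_nonneg_right ih (quot_pos hMpos n).le
      _ ≤ M (n + k) * quotSeq M (n + k) :=
          mul_le_mul_of_nonneg_left hm (hMpos _).le
      _ = M (n + k + 1) := by
          unfold quotSeq
          rw [mul_div_cancel₀ _ (hMpos (n + k)).ne']

lemma le_mul_quot_pow (hMpos : ∀ j, 0 < M j) (hlc : IsLogConvexSeq M) (j k : ℕ) :
    M (j + k) ≤ M j * quotSeq M (j + k) ^ k := by
  induction k with
  | zero => simp
  | succ k ih =>
    have hm := quot_mono hMpos hlc (show j + k ≤ j + (k + 1) by omega)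
    have hpow : quotSeq M (j + k) ^ (k + 1) ≤ quotSeq M (j + (k + 1)) ^ (k + 1) :=
      pow_le_pow_left₀ (quot_pos hMpos _).le hm _
    calc M (j + (k + 1)) = M (j + k) * quotSeq M (j + k) := by
          unfold quotSeq
          rw [show j + (k + 1) = j + k + 1 by omega,
            mul_div_cancel₀ _ (hMpos (j + k)).ne']
      _ ≤ M j * quotSeq M (j + k) ^ k * quotSeq M (j + k) :=
          mul_le_mul_of_nonneg_right ih (quot_pos hMpos _).le
      _ = M j * quotSeq M (j + k) ^ (k + 1) := by ring
      _ ≤ M j * quotSeq M (j + (k + 1)) ^ (k + 1) :=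
          mul_le_mul_of_nonneg_left hpow (hMpos _).le

lemma coefT_mul_eq (hMpos : ∀ j, 0 < M j) (n j : ℕ) :
    coefT M n * quotSeq M n ^ j = (1 / 2 : ℝ) ^ n * (M n * quotSeq M n ^ j / quotSeq M n ^ n) := by
  unfold coefT quotSeq
  ring

lemma term_pos (hMpos : ∀ j, 0 < M j) (n j : ℕ) :
    0 < coefT M n * quotSeq M n ^ j := by
  rw [coefT_mul_eq hMpos]
  have hm := quot_pos hMpos n
  exact mul_pos (by positivity)
    (div_pos (mul_pos (hMpos n) (pow_pos hm j)) (pow_pos hm n))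

lemma term_le (hMpos : ∀ j, 0 < M j) (hlc : IsLogConvexSeq M) (n j : ℕ) :
    coefT M n * quotSeq M n ^ j ≤ (1 / 2 : ℝ) ^ n * M j := by
  rw [coefT_mul_eq hMpos]
  set m := quotSeq M n with hmdef
  have hm : 0 < m := quot_pos hMpos n
  have h2 : (0:ℝ) < (1 / 2 : ℝ) ^ n := by positivity
  rw [mul_le_mul_iff_right₀ h2]
  rcases le_or_gt n j with hnj | hjn
  · have hkey := mul_quot_pow_le hMpos hlc n (j - n)
    rw [show n + (j - n) = j by omega, ← hmdef] at hkey
    have heq : M n * m ^ j / m ^ n = M n * m ^ (j - n) := by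
      rw [show j = n + (j - n) by omega, pow_add, mul_comm (m ^ n), ← mul_assoc,
        mul_div_assoc, div_self (pow_ne_zero n hm.ne'), mul_one,
        Nat.add_sub_cancel_left]
    rw [heq]; exact hkey
  · have hkey := le_mul_quot_pow hMpos hlc j (n - j)
    rw [show j + (n - j) = n by omega, ← hmdef] at hkey
    have heq : M n * m ^ j / m ^ n = M n / m ^ (n - j) := by
      rw [show n = j + (n - j) by omega, pow_add, mul_comm (m ^ j),
        mul_div_mul_right _ _ (pow_ne_zero j hm.ne'), Nat.add_sub_cancel_left]
    rw [heq, div_le_iff₀ (by positivity)]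
    linarith [hkey]

lemma term_diag (hMpos : ∀ j, 0 < M j) (j : ℕ) :
    coefT M j * quotSeq M j ^ j = M j / 2 ^ j := by
  rw [coefT_mul_eq hMpos]
  have hm := (quot_pos hMpos j).ne'
  field_simp
  rw [mul_right_comm, ← mul_pow]; norm_num

end aux

/-- lower and (under log-convexity) upper bounds for
`R_j = ∑_n 2^{-n}(M_n/m_n^n) m_n^j`; under log-convexity `(R_j)` is equivalent to `M`. -/
theorem stmt_3 (M : ℕ → ℝ) (hMpos : ∀ j, 0 < M j) (hM0 : M 0 = 1) :
    (∀ j : ℕ,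
      ENNReal.ofReal (M j / 2 ^ j) ≤
        ∑' n : ℕ, ENNReal.ofReal (coefT M n * (quotSeq M n) ^ j)) ∧
    (IsLogConvexSeq M →
      (∀ j : ℕ, Summable (fun n : ℕ => coefT M n * (quotSeq M n) ^ j)) ∧
      (∀ j : ℕ, Rseq M j ≤ 2 * M j) ∧
      SeqEquiv (Rseq M) M) := by
  constructor
  · intro j
    calc ENNReal.ofReal (M j / 2 ^ j)
        = ENNReal.ofReal (coefT M j * quotSeq M j ^ j) := by rw [term_diag hMpos]
      _ ≤ ∑' n : ℕ, ENNReal.ofReal (coefT M n * quotSeq M n ^ j) :=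
          ENNReal.le_tsum j
  · intro hlc
    have hsum : ∀ j : ℕ, Summable (fun n : ℕ => coefT M n * quotSeq M n ^ j) := by
      intro j
      apply Summable.of_nonneg_of_le (fun n => (term_pos hMpos n j).le)
        (fun n => term_le hMpos hlc n j)
      exact (summable_geometric_of_lt_one (by norm_num) (by norm_num)).mul_right (M j)
    have hub : ∀ j : ℕ, Rseq M j ≤ 2 * M j := by
      intro j
      have h1 : Rseq M j ≤ ∑' n : ℕ, (1 / 2 : ℝ) ^ n * M j :=
        Summable.tsum_le_tsum (fun n => term_le hMpos hlc n j) (hsum j)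
          ((summable_geometric_of_lt_one (by norm_num) (by norm_num)).mul_right (M j))
      have h2 : ∑' n : ℕ, (1 / 2 : ℝ) ^ n * M j = 2 * M j := by
        rw [tsum_mul_right, tsum_geometric_of_lt_one (by norm_num) (by norm_num)]
        norm_num
      linarith
    have hlb : ∀ j : ℕ, M j / 2 ^ j ≤ Rseq M j := by
      intro j
      rw [← term_diag hMpos j]
      exact Summable.le_tsum (hsum j) j (fun n _ => (term_pos hMpos n j).le)
    refine ⟨hsum, hub, 2, two_pos, 2, two_pos, fun j => ?_⟩
    have h2j : (1:ℝ) ≤ 2 ^ j := one_le_pow₀ (by norm_num : (1:ℝ) ≤ 2)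
    have hMj := hMpos j
    have hR : 0 < Rseq M j := lt_of_lt_of_le (by positivity) (hlb j)
    constructor
    · nlinarith [hub j]
    · have := hlb j
      rw [div_le_iff₀ (by positivity)] at this
      nlinarith
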